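/- Let N ≥ 2 be an integer, c ∈ (0,N), σ > 0, and set a = c/N, b = (N²/c − 1)/(N − 1), θ = σb. Let p_t(0) = (N − 1) Σ_{j=1}^∞ N^{−j} e^{−θ a^j t} for t > 0 (the return density of the c-hierarchical random walk). Then for every integer k ≥ 0, the integral ∫_0^∞ t^k p_t(0) dt is finite if and only if c^{k+1} > N^k, i.e. if and only if c > N^{k/(k+1)}. -/

import Mathlib

open MeasureTheory Filter Topology

lemma core_integrable (k : ℕ) (l : ℝ) (hl : 0 < l) :
    IntegrableOn (fun t : ℝ => t ^ k * Real.exp (-(l * t))) (Set.Ioi 0) := by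
  have h := integrableOn_rpow_mul_exp_neg_mul_rpow (p := 1) (s := k) (b := l)
    (by exact_mod_cast neg_one_lt_zero.trans_le (Nat.cast_nonneg k)) one_pos hl
  refine h.congr_fun (fun t ht => ?_) measurableSet_Ioi
  dsimp only
  rw [Real.rpow_one, Real.rpow_natCast, neg_mul]

lemma core_lint (k : ℕ) (l : ℝ) (hl : 0 < l) :
    ∫⁻ t in Set.Ioi 0, ENNReal.ofReal (t ^ k * Real.exp (-(l * t)))
      = ENNReal.ofReal ((Nat.factorial k : ℝ) * (1 / l) ^ (k + 1)) := by
  rw [← MeasureTheory.ofReal_integral_eq_lintegral_ofReal (core_integrable k l hl)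
    ((ae_restrict_iff' measurableSet_Ioi).2 (Filter.Eventually.of_forall
      (fun t ht => mul_nonneg (pow_nonneg (le_of_lt (Set.mem_Ioi.mp ht)) k) (Real.exp_nonneg _))))]
  congr 1
  have h := Real.integral_rpow_mul_exp_neg_mul_Ioi (a := (k : ℝ) + 1) (r := l)
    (by positivity) hl
  rw [show ((k:ℝ)+1) - 1 = (k:ℝ) by ring] at h
  calc ∫ t in Set.Ioi 0, t ^ k * Real.exp (-(l * t))
      = ∫ t in Set.Ioi (0:ℝ), t ^ ((k:ℝ)) * Real.exp (-(l * t)) := by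
        refine setIntegral_congr_fun measurableSet_Ioi (fun t ht => ?_)
        rw [Real.rpow_natCast]
    _ = (1 / l) ^ ((k:ℝ) + 1) * Real.Gamma ((k:ℝ) + 1) := h
    _ = (Nat.factorial k : ℝ) * (1 / l) ^ (k + 1) := by
        rw [Real.Gamma_nat_eq_factorial, mul_comm, ← Real.rpow_natCast (1/l) (k+1)]
        push_cast; ring_nf

theorem stmt16 (N : ℕ) (hN : 2 ≤ N) (c σ : ℝ) (hc0 : 0 < c) (hcN : c < N) (hσ : 0 < σ)
    (a b θ : ℝ)
    (ha : a = c / N) (hb : b = ((N:ℝ) ^ 2 / c - 1) / ((N:ℝ) - 1)) (hθ : θ = σ * b)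
    (p : ℝ → ℝ)
    (hp : ∀ t > 0, p t =
      ((N:ℝ) - 1) * ∑' j : ℕ, ((N:ℝ) ^ (j + 1))⁻¹ * Real.exp (-(θ * a ^ (j + 1) * t))) :
    ∀ k : ℕ,
      IntegrableOn (fun t : ℝ => t ^ k * p t) (Set.Ioi 0) ↔ (N:ℝ) ^ k < c ^ (k + 1) := by
  intro k
  have hN1 : (1:ℝ) < N := by exact_mod_cast Nat.lt_of_lt_of_le one_lt_two hN
  have hN0 : (0:ℝ) < N := lt_trans one_pos hN1
  have ha0 : 0 < a := ha ▸ div_pos hc0 hN0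
  have ha1 : a < 1 := by rw [ha]; exact (div_lt_one hN0).2 hcN
  have hcN2 : c < (N:ℝ) ^ 2 := lt_of_lt_of_le hcN (by nlinarith)
  have hb0 : 0 < b := by
    rw [hb]
    have h1 : (1:ℝ) < (N:ℝ)^2 / c := (one_lt_div hc0).2 hcN2
    exact div_pos (by linarith) (by linarith)
  have hθ0 : 0 < θ := hθ ▸ mul_pos hσ hb0
  set g : ℕ → ℝ → ENNReal := fun j t =>
    ENNReal.ofReal (((N:ℝ) ^ (j + 1))⁻¹ * Real.exp (-(θ * a ^ (j + 1) * t))) with hg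
  have hgmeas : ∀ j, Measurable (g j) := by
    intro j
    apply Measurable.ennreal_ofReal
    fun_prop
  have hterm_nonneg : ∀ (j : ℕ) (t : ℝ),
      0 ≤ ((N:ℝ) ^ (j + 1))⁻¹ * Real.exp (-(θ * a ^ (j + 1) * t)) := by
    intro j t; positivity
  -- summability for t > 0
  have hgeo : Summable (fun j : ℕ => ((N:ℝ)⁻¹) ^ (j + 1)) := by
    have := (summable_geometric_of_lt_one (by positivity)
      (inv_lt_one_of_one_lt₀ hN1)).mul_left ((N:ℝ)⁻¹)
    refine this.congr (fun j => ?_)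
    rw [pow_succ']
  have hsum : ∀ t : ℝ, 0 < t → Summable
      (fun j : ℕ => ((N:ℝ) ^ (j + 1))⁻¹ * Real.exp (-(θ * a ^ (j + 1) * t))) := by
    intro t ht
    refine Summable.of_nonneg_of_le (fun j => hterm_nonneg j t) (fun j => ?_) hgeo
    have h1 : Real.exp (-(θ * a ^ (j + 1) * t)) ≤ 1 :=
      Real.exp_le_one_iff.2 (by have := mul_pos (mul_pos hθ0 (pow_pos ha0 (j+1))) ht; linarith)
    calc ((N:ℝ) ^ (j + 1))⁻¹ * Real.exp (-(θ * a ^ (j + 1) * t))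
        ≤ ((N:ℝ) ^ (j + 1))⁻¹ * 1 := by
          apply mul_le_mul_of_nonneg_left h1 (by positivity)
      _ = ((N:ℝ)⁻¹) ^ (j + 1) := by rw [mul_one, inv_pow]
  -- tsum relation
  have hq : ∀ t : ℝ, 0 < t → (∑' j, g j t) =
      ENNReal.ofReal (∑' j : ℕ, ((N:ℝ) ^ (j + 1))⁻¹ * Real.exp (-(θ * a ^ (j + 1) * t))) := by
    intro t ht
    exact (ENNReal.ofReal_tsum_of_nonneg (fun j => hterm_nonneg j t) (hsum t ht)).symm
  have htsum_nonneg : ∀ t : ℝ,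
      0 ≤ ∑' j : ℕ, ((N:ℝ) ^ (j + 1))⁻¹ * Real.exp (-(θ * a ^ (j + 1) * t)) := fun t =>
    tsum_nonneg (fun j => hterm_nonneg j t)
  -- a.e. nonnegativity
  have hnn : 0 ≤ᵐ[(volume : Measure ℝ).restrict (Set.Ioi 0)] fun t : ℝ => t ^ k * p t := by
    refine (ae_restrict_iff' measurableSet_Ioi).2 (Filter.Eventually.of_forall (fun t ht => ?_))
    have ht : 0 < t := ht
    simp only [Pi.zero_apply]
    rw [hp t ht]
    exact mul_nonneg (pow_nonneg ht.le k)
      (mul_nonneg (by linarith) (htsum_nonneg t))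
  -- a.e. strong measurability
  have hF : Measurable fun t : ℝ => t ^ k * (((N:ℝ) - 1) * (∑' j, g j t).toReal) := by
    apply Measurable.mul (by fun_prop)
    exact (Measurable.ennreal_tsum (fun j => (hgmeas j).comp measurable_id)).ennreal_toReal.const_mul _
  have haesm : AEStronglyMeasurable (fun t : ℝ => t ^ k * p t)
      ((volume : Measure ℝ).restrict (Set.Ioi 0)) := by
    refine hF.aestronglyMeasurable.congr ?_
    refine (ae_restrict_iff' measurableSet_Ioi).2 (Filter.Eventually.of_forall (fun t ht => ?_))
    have ht : 0 < t := ht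
    dsimp only
    rw [hp t ht, hq t ht, ENNReal.toReal_ofReal (htsum_nonneg t)]
  -- notation
  set L : ENNReal := ∫⁻ t in Set.Ioi 0, ENNReal.ofReal (t ^ k * p t) with hL
  set s : ℝ := (N:ℝ) ^ k / c ^ (k + 1) with hs
  set D : ℝ := ((N:ℝ) - 1) * (Nat.factorial k : ℝ) * (1 / θ) ^ (k + 1) with hD
  have hs0 : 0 < s := by positivity
  have hD0 : 0 < D := by
    apply mul_pos (mul_pos (by linarith) _) (by positivity)
    exact_mod_cast Nat.factorial_pos k
  have hinner_meas : ∀ j : ℕ,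
      Measurable fun t : ℝ => ENNReal.ofReal (t ^ k * Real.exp (-(θ * a ^ (j + 1) * t))) := by
    intro j; apply Measurable.ennreal_ofReal; fun_prop
  -- main computation of L
  have hL1 : L = ∑' j : ℕ, ∫⁻ t in Set.Ioi 0,
      ENNReal.ofReal (((N:ℝ) - 1) * ((N:ℝ) ^ (j + 1))⁻¹)
        * ENNReal.ofReal (t ^ k * Real.exp (-(θ * a ^ (j + 1) * t))) := by
    rw [hL, ← lintegral_tsum (fun j => (((hinner_meas j).const_mul (ENNReal.ofReal (((N:ℝ) - 1) * ((N:ℝ) ^ (j + 1))⁻¹))).aemeasurable))]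
    refine setLIntegral_congr_fun measurableSet_Ioi
      (fun t ht => ?_)
    have ht : 0 < t := ht
    rw [hp t ht, show t ^ k * (((N:ℝ) - 1) *
        ∑' j : ℕ, ((N:ℝ) ^ (j + 1))⁻¹ * Real.exp (-(θ * a ^ (j + 1) * t)))
      = (t ^ k * ((N:ℝ) - 1)) *
        ∑' j : ℕ, ((N:ℝ) ^ (j + 1))⁻¹ * Real.exp (-(θ * a ^ (j + 1) * t)) by ring,
      ENNReal.ofReal_mul (mul_nonneg (pow_nonneg ht.le k) (by linarith) : (0:ℝ) ≤ t ^ k * ((N:ℝ) - 1)), ← hq t ht,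
      ← ENNReal.tsum_mul_left]
    refine tsum_congr fun j => ?_
    rw [hg]
    rw [← ENNReal.ofReal_mul (mul_nonneg (pow_nonneg ht.le k) (by linarith) : (0:ℝ) ≤ t ^ k * ((N:ℝ) - 1)),
      ← ENNReal.ofReal_mul (mul_nonneg (by linarith) (by positivity) : (0:ℝ) ≤ ((N:ℝ) - 1) * ((N:ℝ) ^ (j + 1))⁻¹)]
    congr 1
    ring
  have hL2 : L = ∑' j : ℕ, ENNReal.ofReal (D * s ^ (j + 1)) := by
    rw [hL1]
    refine tsum_congr fun j => ?_
    rw [lintegral_const_mul _ (hinner_meas j),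
      core_lint k (θ * a ^ (j + 1)) (mul_pos hθ0 (pow_pos ha0 _)),
      ← ENNReal.ofReal_mul (mul_nonneg (by linarith) (by positivity) : (0:ℝ) ≤ ((N:ℝ) - 1) * ((N:ℝ) ^ (j + 1))⁻¹)]
    congr 1
    rw [hD, hs, ha]
    have hc' : c ≠ 0 := ne_of_gt hc0
    have hN' : ((N:ℝ)) ≠ 0 := ne_of_gt hN0
    have hθ' : θ ≠ 0 := ne_of_gt hθ0
    simp only [one_div, div_pow, mul_pow, inv_pow, ← pow_mul, div_eq_mul_inv, mul_inv, inv_inv]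
    field_simp
    ring
  have hL3 : L = ENNReal.ofReal D * (ENNReal.ofReal s * (1 - ENNReal.ofReal s)⁻¹) := by
    rw [hL2]
    have : ∀ j : ℕ, ENNReal.ofReal (D * s ^ (j + 1))
        = ENNReal.ofReal D * (ENNReal.ofReal s * (ENNReal.ofReal s) ^ j) := by
      intro j
      rw [ENNReal.ofReal_mul hD0.le, ENNReal.ofReal_pow hs0.le, pow_succ']
    simp_rw [this, ENNReal.tsum_mul_left, ENNReal.tsum_geometric]
  have hDne : ENNReal.ofReal D ≠ 0 := by
    simp [ENNReal.ofReal_eq_zero, not_le, hD0]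
  have hsne : ENNReal.ofReal s ≠ 0 := by
    simp [ENNReal.ofReal_eq_zero, not_le, hs0]
  have hfin : L < ⊤ ↔ s < 1 := by
    constructor
    · intro h
      by_contra hcon
      push_neg at hcon
      have h1 : (1 : ENNReal) ≤ ENNReal.ofReal s := by
        rw [show (1 : ENNReal) = ENNReal.ofReal 1 by simp]
        exact ENNReal.ofReal_le_ofReal hcon
      rw [hL3, tsub_eq_zero_of_le h1, ENNReal.inv_zero, ENNReal.mul_top hsne,
        ENNReal.mul_top hDne] at h
      exact (lt_irrefl _ h).elim
    · intro h
      rw [hL3]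
      have h1 : ENNReal.ofReal s < 1 := by
        rw [show (1 : ENNReal) = ENNReal.ofReal 1 by simp]
        exact (ENNReal.ofReal_lt_ofReal_iff one_pos).2 h
      have h2 : (1 - ENNReal.ofReal s)⁻¹ ≠ ⊤ := by
        rw [Ne, ENNReal.inv_eq_top, tsub_eq_zero_iff_le]
        exact not_le.2 h1
      exact ENNReal.mul_lt_top ENNReal.ofReal_lt_top
        (ENNReal.mul_lt_top ENNReal.ofReal_lt_top h2.lt_top)
  have hint : IntegrableOn (fun t : ℝ => t ^ k * p t) (Set.Ioi 0) ↔ L < ⊤ := by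
    constructor
    · intro h
      exact (hasFiniteIntegral_iff_ofReal hnn).1 h.2
    · intro h
      exact ⟨haesm, (hasFiniteIntegral_iff_ofReal hnn).2 h⟩
  rw [hint, hfin, hs, div_lt_one (by positivity)]
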